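/- The scalar information recursion satisfies P_k > 0 and the closed form 1/P_k = 1/P_0 + ∑_{i=1}^k β_i φ_i² for all k ≥ 1; moreover, under the boundedness and persistent excitation hypotheses there exist constants c₁, c₂ > 0 such that c₁/k ≤ P_k ≤ c₂/k for all k ≥ 1. -/

import Mathlib

open Finset

set_option maxHeartbeats 1600000

/-- The scalar information recursion satisfies `P_k > 0` and the closed
form `1/P_k = 1/P_0 + ∑_{i=1}^k β_i φ_i²` for all `k ≥ 1`; moreover, under the
boundedness and persistent excitation hypotheses there exist constants `c₁, c₂ > 0`
such that `c₁/k ≤ P_k ≤ c₂/k` for all `k ≥ 1`. -/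
theorem scalar_information_recursion_growth
    (φ : ℕ → ℝ) (φbar : ℝ) (hφ : ∀ k, |φ k| ≤ φbar)
    (N : ℕ) (hN : 1 ≤ N) (δ : ℝ) (hδ : 0 < δ)
    (hPE : ∀ k ≥ 1, (N : ℝ) * δ ^ 2 ≤ ∑ i ∈ Finset.Ico k (k + N), (φ i) ^ 2)
    (β : ℕ → ℝ) (βl βu : ℝ) (hβl : 0 < βl) (hβ : ∀ k, βl ≤ β k ∧ β k ≤ βu)
    (P : ℕ → ℝ) (hP0 : 0 < P 0)
    (hP : ∀ k : ℕ, P (k + 1) = P k -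
      β (k + 1) * (P k) ^ 2 * (φ (k + 1)) ^ 2 / (1 + β (k + 1) * P k * (φ (k + 1)) ^ 2)) :
    (∀ k : ℕ, 1 ≤ k →
        0 < P k ∧ (P k)⁻¹ = (P 0)⁻¹ + ∑ i ∈ Finset.Icc 1 k, β i * (φ i) ^ 2) ∧
      ∃ c₁ > 0, ∃ c₂ > 0, ∀ k : ℕ, 1 ≤ k → c₁ / k ≤ P k ∧ P k ≤ c₂ / k := by
  have hβu : 0 < βu := lt_of_lt_of_le hβl (le_trans (hβ 0).1 (hβ 0).2)
  have hφbar : 0 ≤ φbar := le_trans (abs_nonneg _) (hφ 0)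
  have hφsq : ∀ i, (φ i) ^ 2 ≤ φbar ^ 2 := by
    intro i
    have := pow_le_pow_left₀ (abs_nonneg (φ i)) (hφ i) 2
    rwa [sq_abs] at this
  -- closed form and positivity
  have key : ∀ k : ℕ, 0 < P k ∧
      (P k)⁻¹ = (P 0)⁻¹ + ∑ i ∈ Finset.Icc 1 k, β i * (φ i) ^ 2 := by
    intro k
    induction k with
    | zero => simp [hP0]
    | succ n ih =>
      obtain ⟨hpos, hform⟩ := ih
      have hb : 0 < β (n + 1) := lt_of_lt_of_le hβl (hβ (n + 1)).1
      have hD : 0 < 1 + β (n + 1) * P n * (φ (n + 1)) ^ 2 := by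
        have : 0 ≤ β (n + 1) * P n * (φ (n + 1)) ^ 2 :=
          mul_nonneg (mul_nonneg hb.le hpos.le) (sq_nonneg _)
        linarith
      have hPn1 : P (n + 1) = P n / (1 + β (n + 1) * P n * (φ (n + 1)) ^ 2) := by
        rw [hP n]
        field_simp
        ring
      have hpos' : 0 < P (n + 1) := by rw [hPn1]; exact div_pos hpos hD
      have hinv : (P (n + 1))⁻¹ = (P n)⁻¹ + β (n + 1) * (φ (n + 1)) ^ 2 := by
        rw [hPn1, inv_div]
        field_simp
      refine ⟨hpos', ?_⟩
      rw [hinv, hform, Finset.sum_Icc_succ_top (by omega : 1 ≤ n + 1)]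
      ring
  -- block lower bound
  have hblock : ∀ m : ℕ, (m * N : ℝ) * δ ^ 2 ≤ ∑ i ∈ Finset.Icc 1 (m * N), (φ i) ^ 2 := by
    intro m
    induction m with
    | zero => simp
    | succ m ih =>
      have hmN : (m + 1) * N = m * N + N := by ring
      have h1 : ∑ i ∈ Finset.Ico 1 (m * N + 1), (φ i) ^ 2 +
          ∑ i ∈ Finset.Ico (m * N + 1) (m * N + 1 + N), (φ i) ^ 2 =
          ∑ i ∈ Finset.Ico 1 (m * N + 1 + N), (φ i) ^ 2 :=
        Finset.sum_Ico_consecutive _ (by omega) (by omega)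
      have h2 := hPE (m * N + 1) (by omega)
      have hIcc : ∀ n : ℕ, (Finset.Icc 1 n : Finset ℕ) = Finset.Ico 1 (n + 1) := by
        intro n; rw [Finset.Ico_add_one_right_eq_Icc]
      rw [hIcc] at ih ⊢
      rw [hmN]
      have : m * N + N + 1 = m * N + 1 + N := by omega
      rw [this, ← h1]
      push_cast
      nlinarith
  -- nonnegativity of sum terms
  have hterm_nonneg : ∀ i, 0 ≤ β i * (φ i) ^ 2 := fun i =>
    mul_nonneg (le_trans hβl.le (hβ i).1) (sq_nonneg _)
  have hSnonneg : ∀ k : ℕ, 0 ≤ ∑ i ∈ Finset.Icc 1 k, β i * (φ i) ^ 2 := fun k =>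
    Finset.sum_nonneg fun i _ => hterm_nonneg i
  refine ⟨fun k hk => key k, ?_⟩
  -- constants
  refine ⟨((P 0)⁻¹ + βu * φbar ^ 2)⁻¹, by positivity, max (2 / (βl * δ ^ 2)) (N * P 0),
    lt_max_of_lt_left (by positivity), fun k hk => ?_⟩
  obtain ⟨hpos, hform⟩ := key k
  set S := ∑ i ∈ Finset.Icc 1 k, β i * (φ i) ^ 2 with hS
  have hA : (P k)⁻¹ = (P 0)⁻¹ + S := hform
  have hAk : 0 < (P 0)⁻¹ + S := by have := hSnonneg k; positivity
  have hPk : P k = ((P 0)⁻¹ + S)⁻¹ := by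
    rw [← hA, inv_inv]
  have hk1 : (1 : ℝ) ≤ (k : ℝ) := by exact_mod_cast hk
  constructor
  · -- lower bound
    have hSup : S ≤ (k : ℝ) * (βu * φbar ^ 2) := by
      calc S ≤ ∑ i ∈ Finset.Icc 1 k, βu * φbar ^ 2 := by
            apply Finset.sum_le_sum
            intro i _
            have h1 : β i * (φ i) ^ 2 ≤ βu * (φ i) ^ 2 :=
              mul_le_mul_of_nonneg_right (hβ i).2 (sq_nonneg _)
            have h2 : βu * (φ i) ^ 2 ≤ βu * φbar ^ 2 :=
              mul_le_mul_of_nonneg_left (hφsq i) hβu.le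
            linarith
        _ = (k : ℝ) * (βu * φbar ^ 2) := by
            rw [Finset.sum_const, Nat.card_Icc]
            simp [mul_comm]
    have hup : (P 0)⁻¹ + S ≤ (k : ℝ) * ((P 0)⁻¹ + βu * φbar ^ 2) := by
      have h0 : 0 < (P 0)⁻¹ := by positivity
      nlinarith
    rw [hPk, div_eq_mul_inv, ← mul_inv]
    apply inv_anti₀ hAk
    calc (P 0)⁻¹ + S ≤ (k : ℝ) * ((P 0)⁻¹ + βu * φbar ^ 2) := hup
      _ = ((P 0)⁻¹ + βu * φbar ^ 2) * k := by ring
  · -- upper bound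
    set m := k / N with hm
    have hmle : m * N ≤ k := Nat.div_mul_le_self k N
    have hdm := Nat.div_add_mod k N
    have hmod : k % N < N := Nat.mod_lt k (by omega)
    have hklt : (k : ℝ) < (m : ℝ) * N + N := by
      have h1 : ((N * m + k % N : ℕ) : ℝ) = k := by rw [hm]; exact_mod_cast hdm
      have h2 : ((k % N : ℕ) : ℝ) < ((N : ℕ) : ℝ) := by exact_mod_cast hmod
      push_cast at h1
      nlinarith
    have hSlow : βl * ((m * N : ℕ) : ℝ) * δ ^ 2 ≤ S := by
      have h1 : ∑ i ∈ Finset.Icc 1 (m * N), (φ i) ^ 2 ≤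
          ∑ i ∈ Finset.Icc 1 k, (φ i) ^ 2 := by
        apply Finset.sum_le_sum_of_subset_of_nonneg
        · exact Finset.Icc_subset_Icc_right hmle
        · intro i _ _; exact sq_nonneg _
      have h2 : βl * ∑ i ∈ Finset.Icc 1 k, (φ i) ^ 2 ≤ S := by
        rw [hS, Finset.mul_sum]
        apply Finset.sum_le_sum
        intro i _
        exact mul_le_mul_of_nonneg_right (hβ i).1 (sq_nonneg _)
      have h3 := hblock m
      push_cast at h3 ⊢
      nlinarith
    have hc2 : (0:ℝ) < max (2 / (βl * δ ^ 2)) ((N:ℝ) * P 0) := lt_max_of_lt_left (by positivity)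
    have hkpos : (0:ℝ) < k := by linarith
    rw [hPk, le_div_iff₀ hkpos, inv_mul_le_iff₀ hAk]
    rcases Nat.eq_zero_or_pos m with hm0 | hm1
    · have hkN : k < N := by
        have h := hdm
        rw [← hm, hm0, Nat.mul_zero, Nat.zero_add] at h
        omega
      have hkNr : (k:ℝ) ≤ (N:ℝ) := by exact_mod_cast hkN.le
      have hc2' : (N:ℝ) * P 0 ≤ max (2 / (βl * δ ^ 2)) ((N:ℝ) * P 0) := le_max_right _ _
      have hS0 := hSnonneg k
      have hP0inv : (0:ℝ) < (P 0)⁻¹ := by positivity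
      have hcan : (P 0)⁻¹ * P 0 = 1 := inv_mul_cancel₀ hP0.ne'
      nlinarith [mul_le_mul_of_nonneg_left hc2' hAk.le]
    · have hm1r : (1:ℝ) ≤ (m:ℝ) := by exact_mod_cast hm1
      have hNr : (1:ℝ) ≤ (N:ℝ) := by exact_mod_cast hN
      have h2mn : (k:ℝ) ≤ 2 * (m:ℝ) * N := by nlinarith
      have hbd : (0:ℝ) < βl * δ ^ 2 := by positivity
      have hc2' : 2 / (βl * δ ^ 2) ≤ max (2 / (βl * δ ^ 2)) ((N:ℝ) * P 0) := le_max_left _ _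
      have e1 : (βl * ((m:ℝ) * N) * δ ^ 2) * (2 / (βl * δ ^ 2)) = 2 * (m:ℝ) * N := by
        field_simp
      have hSpos : 0 ≤ S := hSnonneg k
      have hP0inv : (0:ℝ) < (P 0)⁻¹ := by positivity
      have hSlow' : βl * ((m:ℝ) * N) * δ ^ 2 ≤ S := by
        have := hSlow
        push_cast at this
        linarith
      have e2 : (βl * ((m:ℝ) * N) * δ ^ 2) * (2 / (βl * δ ^ 2)) ≤ S * (2 / (βl * δ ^ 2)) :=
        mul_le_mul_of_nonneg_right hSlow' (by positivity)
      have e3 : S * (2 / (βl * δ ^ 2)) ≤ S * max (2 / (βl * δ ^ 2)) ((N:ℝ) * P 0) :=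
        mul_le_mul_of_nonneg_left hc2' hSpos
      have e4 : S * max (2 / (βl * δ ^ 2)) ((N:ℝ) * P 0) ≤
          ((P 0)⁻¹ + S) * max (2 / (βl * δ ^ 2)) ((N:ℝ) * P 0) :=
        mul_le_mul_of_nonneg_right (by linarith) hc2.le
      rw [e1] at e2
      linarith
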